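/- Let J ∈ R^{n×n} be invertible and L-Lipschitz as a matrix-valued function of s ∈ R^n (in spectral norm), with fixed point s* of r (r(s*) = 0) and σ_min(J(s)) ≥ √μ > 0 for all s. Then Gauss-Newton iterates s^{(i+1)} = s^{(i)} - J(s^{(i)})^{-1} r(s^{(i)}) satisfy the residual recursion ‖r(s^{(i+1)})‖₂ ≤ (L/(2μ)) ‖r(s^{(i)})‖₂². Consequently, if ‖r(s^{(i)})‖₂ < 2μ/L, then ‖r(s^{(i+1)})‖₂ < ‖r(s^{(i)})‖₂, and the iterates remain in the region {s : ‖r(s)‖₂ < 2μ/L} thereafter, converging quadratically. -/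

import Mathlib

lemma gn_taylor_bound {n : ℕ} {L : ℝ} (hL : 0 ≤ L)
    (r : EuclideanSpace ℝ (Fin n) → EuclideanSpace ℝ (Fin n))
    (J : EuclideanSpace ℝ (Fin n) →
      (EuclideanSpace ℝ (Fin n) →L[ℝ] EuclideanSpace ℝ (Fin n)))
    (hderiv : ∀ s, HasFDerivAt r (J s) s)
    (hLip : ∀ s s', ‖J s - J s'‖ ≤ L * ‖s - s'‖)
    (x Δ : EuclideanSpace ℝ (Fin n)) :
    ‖r (x + Δ) - r x - J x Δ‖ ≤ L / 2 * ‖Δ‖ ^ 2 := by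
  set g : ℝ → EuclideanSpace ℝ (Fin n) := fun τ => r (x + τ • Δ) - τ • (J x Δ) with hg
  set g' : ℝ → EuclideanSpace ℝ (Fin n) := fun τ => J (x + τ • Δ) Δ - J x Δ with hg'
  have hd : ∀ τ : ℝ, HasDerivAt g (g' τ) τ := by
    intro τ
    have h1 : HasDerivAt (fun τ : ℝ => x + τ • Δ) Δ τ := by
      simpa using ((hasDerivAt_id τ).smul_const Δ).const_add x
    have h2 : HasDerivAt (fun τ : ℝ => r (x + τ • Δ)) (J (x + τ • Δ) Δ) τ :=
      (hderiv (x + τ • Δ)).comp_hasDerivAt τ h1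
    have h3 : HasDerivAt (fun τ : ℝ => τ • (J x Δ)) (J x Δ) τ := by
      simpa using (hasDerivAt_id τ).smul_const (J x Δ)
    exact h2.sub h3
  have hJc : Continuous J := by
    have : LipschitzWith (Real.toNNReal L) J := by
      apply LipschitzWith.of_dist_le_mul
      intro a b
      rw [dist_eq_norm, dist_eq_norm, Real.coe_toNNReal L hL]
      exact hLip a b
    exact this.continuous
  have h1 : Continuous fun τ : ℝ => x + τ • Δ :=
    continuous_const.add (continuous_id.smul continuous_const)
  have hc : Continuous g' :=
    ((hJc.comp h1).clm_apply continuous_const).sub continuous_const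
  have hint : IntervalIntegrable g' MeasureTheory.volume 0 1 :=
    hc.intervalIntegrable 0 1
  have heq : ∫ τ in (0:ℝ)..1, g' τ = g 1 - g 0 :=
    intervalIntegral.integral_eq_sub_of_hasDerivAt (fun τ _ => hd τ) hint
  have hgval : g 1 - g 0 = r (x + Δ) - r x - J x Δ := by
    simp only [hg, one_smul, zero_smul, sub_zero]
    abel
  have hbc : Continuous fun τ : ℝ => L * τ * ‖Δ‖ ^ 2 :=
    (continuous_const.mul continuous_id).mul continuous_const
  have hb : ‖∫ τ in (0:ℝ)..1, g' τ‖ ≤ |∫ τ in (0:ℝ)..1, L * τ * ‖Δ‖ ^ 2| := by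
    apply intervalIntegral.norm_integral_le_abs_of_norm_le
      (g := fun τ => L * τ * ‖Δ‖ ^ 2) ?_ (hbc.intervalIntegrable 0 1)
    filter_upwards [MeasureTheory.ae_restrict_mem measurableSet_Ioc] with τ hτ
    rw [Set.uIoc_of_le (by norm_num : (0:ℝ) ≤ 1)] at hτ
    have hτ0 : 0 ≤ τ := le_of_lt hτ.1
    have hga : g' τ = (J (x + τ • Δ) - J x) Δ := by
      rw [hg']; exact (ContinuousLinearMap.sub_apply _ _ _).symm
    calc ‖g' τ‖ ≤ ‖J (x + τ • Δ) - J x‖ * ‖Δ‖ := by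
          rw [hga]; exact (J (x + τ • Δ) - J x).le_opNorm Δ
      _ ≤ (L * ‖τ • Δ‖) * ‖Δ‖ := by
          apply mul_le_mul_of_nonneg_right _ (norm_nonneg Δ)
          have h5 := hLip (x + τ • Δ) x
          rwa [add_sub_cancel_left] at h5
      _ = L * τ * ‖Δ‖ ^ 2 := by
          rw [norm_smul, Real.norm_eq_abs, abs_of_nonneg hτ0]; ring
  have hI : ∫ τ in (0:ℝ)..1, L * τ * ‖Δ‖ ^ 2 = L / 2 * ‖Δ‖ ^ 2 := by
    have h2 : (fun τ : ℝ => L * τ * ‖Δ‖ ^ 2) = fun τ : ℝ => (L * ‖Δ‖ ^ 2) * τ := by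
      funext τ; ring
    rw [h2, intervalIntegral.integral_const_mul, integral_id]
    ring
  have hInn : (0:ℝ) ≤ L / 2 * ‖Δ‖ ^ 2 := by positivity
  calc ‖r (x + Δ) - r x - J x Δ‖ = ‖∫ τ in (0:ℝ)..1, g' τ‖ := by rw [heq, hgval]
    _ ≤ |∫ τ in (0:ℝ)..1, L * τ * ‖Δ‖ ^ 2| := hb
    _ = L / 2 * ‖Δ‖ ^ 2 := by rw [hI, abs_of_nonneg hInn]

theorem gauss_newton_residual_recursion
    (n : ℕ) (L μ : ℝ) (hL : 0 < L) (hμ : 0 < μ)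
    (r : EuclideanSpace ℝ (Fin n) → EuclideanSpace ℝ (Fin n))
    (J Jinv : EuclideanSpace ℝ (Fin n) →
      (EuclideanSpace ℝ (Fin n) →L[ℝ] EuclideanSpace ℝ (Fin n)))
    (hderiv : ∀ s, HasFDerivAt r (J s) s)
    (hLip : ∀ s s', ‖J s - J s'‖ ≤ L * ‖s - s'‖)
    (hinv₁ : ∀ s, (J s).comp (Jinv s) = ContinuousLinearMap.id ℝ _)
    (hinv₂ : ∀ s, (Jinv s).comp (J s) = ContinuousLinearMap.id ℝ _)
    (hσ : ∀ s x, Real.sqrt μ * ‖x‖ ≤ ‖J s x‖)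
    (sstar : EuclideanSpace ℝ (Fin n)) (hroot : r sstar = 0)
    (s : ℕ → EuclideanSpace ℝ (Fin n))
    (hGN : ∀ i, s (i + 1) = s i - Jinv (s i) (r (s i))) :
    (∀ i, ‖r (s (i + 1))‖ ≤ (L / (2 * μ)) * ‖r (s i)‖ ^ 2) ∧
    (∀ i, 0 < ‖r (s i)‖ → ‖r (s i)‖ < 2 * μ / L →
      ‖r (s (i + 1))‖ < ‖r (s i)‖) ∧
    (‖r (s 0)‖ < 2 * μ / L → ∀ i, ‖r (s i)‖ < 2 * μ / L) := by
  have hsqrtμ : 0 < Real.sqrt μ := Real.sqrt_pos.mpr hμ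
  have key : ∀ i, ‖r (s (i + 1))‖ ≤ (L / (2 * μ)) * ‖r (s i)‖ ^ 2 := by
    intro i
    set x := s i with hx
    set Δ : EuclideanSpace ℝ (Fin n) := -(Jinv x (r x)) with hΔ
    have hstep : s (i + 1) = x + Δ := by
      rw [hGN i, sub_eq_add_neg]
    have hJΔ : J x Δ = -(r x) := by
      have := congrArg (fun T : EuclideanSpace ℝ (Fin n) →L[ℝ] _ => T (r x)) (hinv₁ x)
      simp only [ContinuousLinearMap.comp_apply, ContinuousLinearMap.id_apply] at this
      simp [hΔ, this]
    have hΔnorm : ‖Δ‖ ≤ ‖r x‖ / Real.sqrt μ := by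
      rw [le_div_iff₀ hsqrtμ, mul_comm]
      calc Real.sqrt μ * ‖Δ‖ ≤ ‖J x Δ‖ := hσ x Δ
        _ = ‖r x‖ := by rw [hJΔ, norm_neg]
    have hΔsq : ‖Δ‖ ^ 2 ≤ ‖r x‖ ^ 2 / μ := by
      have := pow_le_pow_left₀ (norm_nonneg Δ) hΔnorm 2
      calc ‖Δ‖ ^ 2 ≤ (‖r x‖ / Real.sqrt μ) ^ 2 := this
        _ = ‖r x‖ ^ 2 / μ := by
            rw [div_pow, Real.sq_sqrt hμ.le]
    have htaylor := gn_taylor_bound hL.le r J hderiv hLip x Δ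
    have hval : r (x + Δ) - r x - J x Δ = r (x + Δ) := by
      rw [hJΔ]; abel
    rw [hstep]
    calc ‖r (x + Δ)‖ = ‖r (x + Δ) - r x - J x Δ‖ := by rw [hval]
      _ ≤ L / 2 * ‖Δ‖ ^ 2 := htaylor
      _ ≤ L / 2 * (‖r x‖ ^ 2 / μ) := by
          exact mul_le_mul_of_nonneg_left hΔsq (by positivity)
      _ = L / (2 * μ) * ‖r x‖ ^ 2 := by field_simp
  have decr : ∀ i, 0 < ‖r (s i)‖ → ‖r (s i)‖ < 2 * μ / L →
      ‖r (s (i + 1))‖ < ‖r (s i)‖ := by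
    intro i hpos hsmall
    calc ‖r (s (i + 1))‖ ≤ L / (2 * μ) * ‖r (s i)‖ ^ 2 := key i
      _ = (L / (2 * μ) * ‖r (s i)‖) * ‖r (s i)‖ := by ring
      _ < 1 * ‖r (s i)‖ := by
          refine mul_lt_mul_of_pos_right ?_ hpos
          rw [div_mul_eq_mul_div, div_lt_one (by positivity)]
          calc L * ‖r (s i)‖ < L * (2 * μ / L) :=
                mul_lt_mul_of_pos_left hsmall hL
            _ = 2 * μ := by field_simp
      _ = ‖r (s i)‖ := one_mul _
  refine ⟨key, decr, ?_⟩
  intro h0 i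
  induction i with
  | zero => exact h0
  | succ i ih =>
    rcases eq_or_lt_of_le (norm_nonneg (r (s i))) with hz | hpos
    · calc ‖r (s (i + 1))‖ ≤ L / (2 * μ) * ‖r (s i)‖ ^ 2 := key i
        _ = 0 := by rw [← hz]; ring
        _ < 2 * μ / L := by positivity
    · exact lt_trans (decr i hpos ih) ih
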